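/- arXiv:1808.09748 — 2 statements merged into one kernel-verified Lean document; each statement's English description precedes it below -/
import Mathlib

section
/- Let a < 1 and let s_n → ∞ with s_n ≤ n^υ for some υ ∈ (0,1). Let C denote the class of two-sided thresholding-based multiple testing procedures, i.e. those of the form φ_i(X) = 1{X_i ≥ τ₁(X) or −X_i ≥ τ₂(X)} for measurable τ₁(X), τ₂(X) ≥ 0. Then, with the classification risk R(θ₀,φ) = FDR(θ₀,φ) + FNR(θ₀,φ): liminf_{n→∞} inf_{φ ∈ C} sup_{θ₀ ∈ L₀[s_n;a]} R(θ₀,φ) ≥ 1. -/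
open MeasureTheory ProbabilityTheory Filter Set
open scoped Classical ENNReal

/-- The standard normal density. -/
noncomputable def stdphi (x : ℝ) : ℝ := (Real.sqrt (2 * Real.pi))⁻¹ * Real.exp (-(x ^ 2) / 2)

/-- The standard normal upper tail function `Φ̄`. -/
noncomputable def Phibar (s : ℝ) : ℝ := ∫ x in Set.Ioi s, stdphi x

/-- The inverse of `Φ̄` (as the generalized inverse). -/
noncomputable def PhibarInv (y : ℝ) : ℝ := sInf {x : ℝ | Phibar x ≤ y}

/-- The convolution `g = γ ⋆ φ`. -/
noncomputable def gconv (γ : ℝ → ℝ) (x : ℝ) : ℝ := ∫ u, γ (x - u) * stdphi u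

/-- The upper tail `Ḡ` of `g = γ ⋆ φ`. -/
noncomputable def Gbar (γ : ℝ → ℝ) (s : ℝ) : ℝ := ∫ x in Set.Ioi s, gconv γ x

/-- The ℓ-value `ℓ(x; w, g)`. -/
noncomputable def lval (γ : ℝ → ℝ) (w x : ℝ) : ℝ :=
  ((1 - w) * stdphi x) / ((1 - w) * stdphi x + w * gconv γ x)

/-- The q-value `q(x; w, g)`. -/
noncomputable def qval (γ : ℝ → ℝ) (w x : ℝ) : ℝ :=
  ((1 - w) * Phibar |x|) / ((1 - w) * Phibar |x| + w * Gbar γ |x|)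

/-- The law of the noise vector `ε = (ε₁, …, ε_n)`, i.i.d. standard normals. -/
noncomputable def noise (n : ℕ) : Measure (Fin n → ℝ) :=
  Measure.pi fun _ => gaussianReal 0 1

/-- The false discovery proportion of procedure `φ` at configuration `θ`, observed data `x`. -/
noncomputable def FDP (n : ℕ) (θ : Fin n → ℝ) (φ : (Fin n → ℝ) → Fin n → Prop)
    (x : Fin n → ℝ) : ℝ :=
  (∑ i, (if θ i = 0 ∧ φ x i then (1 : ℝ) else 0)) /
    max 1 (∑ i, (if φ x i then (1 : ℝ) else 0))

/-- The false discovery rate `FDR(θ, φ)` in the Gaussian sequence model `X = θ + ε`. -/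
noncomputable def FDR (n : ℕ) (θ : Fin n → ℝ) (φ : (Fin n → ℝ) → Fin n → Prop) : ℝ :=
  ∫ e, FDP n θ φ (fun i => θ i + e i) ∂(noise n)

/-- The false negative proportion. -/
noncomputable def FNP (n : ℕ) (θ : Fin n → ℝ) (φ : (Fin n → ℝ) → Fin n → Prop)
    (x : Fin n → ℝ) : ℝ :=
  (∑ i, (if θ i ≠ 0 ∧ ¬ φ x i then (1 : ℝ) else 0)) /
    max 1 (∑ i, (if θ i ≠ 0 then (1 : ℝ) else 0))

/-- The false negative rate `FNR(θ, φ)` in the Gaussian sequence model `X = θ + ε`. -/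
noncomputable def FNR (n : ℕ) (θ : Fin n → ℝ) (φ : (Fin n → ℝ) → Fin n → Prop) : ℝ :=
  ∫ e, FNP n θ φ (fun i => θ i + e i) ∂(noise n)

/-- The sparsity class `ℓ₀[s]`. -/
def ell0 (n s : ℕ) : Set (Fin n → ℝ) :=
  {θ | (Finset.univ.filter (fun i => θ i ≠ 0)).card ≤ s}

/-- The class `L₀[s; a]` of strong `s`-sparse signals. -/
def calL0 (n s : ℕ) (a : ℝ) : Set (Fin n → ℝ) :=
  {θ | (Finset.univ.filter (fun i => θ i ≠ 0)).card = s ∧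
    ∀ i, θ i ≠ 0 → a * Real.sqrt (2 * Real.log ((n : ℝ) / (s : ℝ))) ≤ |θ i|}

/-- The class `L₀⁻[s; b]` of bounded `s`-sparse signals. -/
def calL0minus (n s : ℕ) (b : ℝ) : Set (Fin n → ℝ) :=
  {θ | (Finset.univ.filter (fun i => θ i ≠ 0)).card = s ∧ ∀ i, |θ i| ≤ b}

/-- The class of two-sided thresholding-based multiple testing procedures. -/
def IsThresholding (n : ℕ) (φ : (Fin n → ℝ) → Fin n → Prop) : Prop :=
  ∃ τ₁ τ₂ : (Fin n → ℝ) → ℝ, Measurable τ₁ ∧ Measurable τ₂ ∧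
    (∀ x, 0 ≤ τ₁ x ∧ 0 ≤ τ₂ x) ∧
    (∀ x i, φ x i ↔ (τ₁ x ≤ x i ∨ τ₂ x ≤ -(x i)))

/-- A unimodal symmetric slab density satisfying assumptions (A1)–(A3) of the paper,
with Lipschitz constant `Λ` in (A1) and tail exponent `κ` in (A2). -/
structure SlabDensity (γ : ℝ → ℝ) (Λ κ : ℝ) : Prop where
  pos : ∀ x, 0 < γ x
  symm : ∀ x, γ (-x) = γ x
  unimodal : AntitoneOn γ (Set.Ici 0)
  density : ∫ x, γ x = 1
  lam_pos : 0 < Λ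
  loglip : ∀ x y : ℝ, |Real.log (γ x) - Real.log (γ y)| ≤ Λ * |x - y|
  kappa_mem : κ ∈ Set.Icc (1 : ℝ) 2
  tail : ∃ c C : ℝ, 0 < c ∧ 0 < C ∧ ∃ y₀ : ℝ, ∀ y ≥ y₀,
    c * y ^ (κ - 1) ≤ (∫ u in Set.Ioi y, γ u) / γ y ∧
      (∫ u in Set.Ioi y, γ u) / γ y ≤ C * y ^ (κ - 1)
  sqbdd : ∃ M : ℝ, ∀ y : ℝ, y ^ 2 * γ y ≤ M

/-- The marginal log-likelihood `L(w)` of the spike-and-slab weight `w`. -/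
noncomputable def logL (γ : ℝ → ℝ) (n : ℕ) (x : Fin n → ℝ) (w : ℝ) : ℝ :=
  ∑ i, Real.log ((1 - w) * stdphi (x i) + w * gconv γ (x i))

/-- `what` is a marginal maximum likelihood estimator of the weight over `[1/n, 1]`. -/
def IsMMLE (γ : ℝ → ℝ) (n : ℕ) (what : (Fin n → ℝ) → ℝ) : Prop :=
  ∀ x : Fin n → ℝ, what x ∈ Set.Icc ((n : ℝ)⁻¹) 1 ∧
    ∀ w ∈ Set.Icc ((n : ℝ)⁻¹) 1, logL γ n x w ≤ logL γ n x (what x)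

/-- The slab distribution (measure with density `γ`). -/
noncomputable def slabMeasure (γ : ℝ → ℝ) : Measure ℝ :=
  volume.withDensity fun x => ENNReal.ofReal (γ x)

/-- The spike and slab distribution `(1−w)δ₀ + wG`. -/
noncomputable def spikeSlab (w : ℝ) (γ : ℝ → ℝ) : Measure ℝ :=
  (ENNReal.ofReal (1 - w)) • Measure.dirac 0 + (ENNReal.ofReal w) • slabMeasure γ

/-- The spike and slab prior `Π_{w,γ} = ((1−w)δ₀ + wG)^{⊗n}`. -/
noncomputable def prior (n : ℕ) (w : ℝ) (γ : ℝ → ℝ) : Measure (Fin n → ℝ) :=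
  Measure.pi fun _ => spikeSlab w γ

/-- The Bayes FDR: the FDR integrated with respect to the prior. -/
noncomputable def BFDR (n : ℕ) (w : ℝ) (γ : ℝ → ℝ) (φ : (Fin n → ℝ) → Fin n → Prop) : ℝ :=
  ∫ θ, FDR n θ φ ∂(prior n w γ)

/-- Probability of an event `A(X)` under the joint law of `(θ, X)`, `θ ~ Π_{w,γ}`, `X = θ + ε`. -/
noncomputable def jointProb (n : ℕ) (w : ℝ) (γ : ℝ → ℝ) (A : (Fin n → ℝ) → Prop) : ℝ :=
  ∫ θ, (∫ e, (if A (fun i => θ i + e i) then (1 : ℝ) else 0) ∂(noise n)) ∂(prior n w γ)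

/-- The posterior cdf of a single coordinate `θᵢ` given `Xᵢ = x`, for the spike and slab prior
with weight `w` and slab `γ`. -/
noncomputable def postCDF (γ : ℝ → ℝ) (w x z : ℝ) : ℝ :=
  lval γ w x * (if (0 : ℝ) ≤ z then 1 else 0) +
    (1 - lval γ w x) * (∫ u in Set.Iic z, stdphi (x - u) * γ u) / gconv γ x

/-- The `u`-quantile of the marginal posterior of `θᵢ` given `Xᵢ = x`. -/
noncomputable def postQuantile (γ : ℝ → ℝ) (w x u : ℝ) : ℝ :=
  sInf {z : ℝ | u ≤ postCDF γ w x z}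


open scoped Topology

namespace CLB

noncomputable def nu : Measure ℝ := gaussianReal 0 1

instance : IsProbabilityMeasure nu := by unfold nu; infer_instance

instance (n : ℕ) : IsProbabilityMeasure (noise n) := by unfold noise; infer_instance

lemma measurable_ind {α : Type*} [MeasurableSpace α] {P : α → Prop} [DecidablePred P]
    (h : MeasurableSet {a | P a}) : Measurable (fun a => if P a then (1:ℝ) else 0) := by
  have : (fun a => if P a then (1:ℝ) else 0) = Set.indicator {a | P a} (fun _ => 1) := by
    ext a; by_cases hp : P a <;> simp [hp]
  rw [this]
  exact measurable_const.indicator h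

lemma integrable_of_bdd {α : Type*} [MeasurableSpace α] {μ : Measure α} [IsFiniteMeasure μ]
    {f : α → ℝ} {C : ℝ} (hm : AEStronglyMeasurable f μ) (h : ∀ a, |f a| ≤ C) :
    Integrable f μ :=
  ⟨hm, HasFiniteIntegral.of_bounded (ae_of_all _ (by simpa using h))⟩

lemma integral_ind {α : Type*} [MeasurableSpace α] (μ : Measure α) [IsFiniteMeasure μ]
    {P : α → Prop} [DecidablePred P] (h : MeasurableSet {a | P a}) :
    ∫ a, (if P a then (1:ℝ) else 0) ∂μ = (μ {a | P a}).toReal := by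
  have : (fun a => if P a then (1:ℝ) else 0) = Set.indicator {a | P a} (fun _ => 1) := by
    ext a; by_cases hp : P a <;> simp [hp]
  rw [this, integral_indicator h]
  simp
  rfl

lemma noise_eval (n : ℕ) (i : Fin n) {A : Set ℝ} (hA : MeasurableSet A) :
    noise n {e | e i ∈ A} = nu A := by
  have h1 : {e : Fin n → ℝ | e i ∈ A} = Set.pi Set.univ (Function.update (fun _ => Set.univ) i A) := by
    rw [← Set.eval_preimage]; rfl
  rw [h1]
  unfold noise
  rw [Measure.pi_pi]
  rw [Fintype.prod_eq_single i (fun k hk => by simp [Function.update_of_ne hk])]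
  simp [nu]

lemma noise_eval_pair (n : ℕ) (i j : Fin n) (hij : i ≠ j) {A B : Set ℝ}
    (hA : MeasurableSet A) (hB : MeasurableSet B) :
    noise n {e | e i ∈ A ∧ e j ∈ B} = nu A * nu B := by
  have h1 : {e : Fin n → ℝ | e i ∈ A ∧ e j ∈ B} =
      Set.pi Set.univ (Function.update (Function.update (fun _ => Set.univ) i A) j B) := by
    ext e
    simp only [Set.mem_setOf_eq, Set.mem_univ_pi]
    constructor
    · rintro ⟨h1, h2⟩ k
      rcases eq_or_ne k j with rfl | hkj
      · simp [Function.update_self, h2]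
      · rw [Function.update_of_ne hkj]
        rcases eq_or_ne k i with rfl | hki
        · simp [Function.update_self, h1]
        · simp [Function.update_of_ne hki]
    · intro h
      constructor
      · have := h i
        rwa [Function.update_of_ne hij, Function.update_self] at this
      · have := h j
        rwa [Function.update_self] at this
  rw [h1]
  unfold noise
  rw [Measure.pi_pi]
  rw [Fintype.prod_eq_mul i j hij (fun k hk => by
    rw [Function.update_of_ne hk.2, Function.update_of_ne hk.1]; simp)]
  rw [Function.update_of_ne hij, Function.update_self, Function.update_self]
  rfl



lemma pdf1_eq (x : ℝ) :
    gaussianPDFReal 0 1 x = (Real.sqrt (2 * Real.pi))⁻¹ * Real.exp (-x ^ 2 / 2) := by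
  unfold gaussianPDFReal
  norm_num

lemma nu_Ici_toReal (t : ℝ) :
    (nu (Ici t)).toReal = ∫ x in Ici t, gaussianPDFReal 0 1 x := by
  unfold nu
  rw [gaussianReal_apply_eq_integral 0 (by norm_num) (Ici t)]
  rw [ENNReal.toReal_ofReal]
  exact setIntegral_nonneg measurableSet_Ici (fun x _ => gaussianPDFReal_nonneg 0 1 x)

lemma tail_lower {t : ℝ} (ht : 0 ≤ t) :
    (Real.sqrt (2 * Real.pi))⁻¹ * Real.exp (-(t + 1) ^ 2 / 2) ≤ (nu (Ici t)).toReal := by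
  rw [nu_Ici_toReal]
  have hint : IntegrableOn (gaussianPDFReal 0 1) (Ici t) :=
    (integrable_gaussianPDFReal 0 1).integrableOn
  have h1 : ∫ x in Icc t (t + 1), gaussianPDFReal 0 1 x ≤ ∫ x in Ici t, gaussianPDFReal 0 1 x := by
    apply setIntegral_mono_set hint
    · exact ae_of_all _ (fun x => gaussianPDFReal_nonneg 0 1 x)
    · exact HasSubset.Subset.eventuallyLE Icc_subset_Ici_self
  refine le_trans ?_ h1
  have h2 : ∀ x ∈ Icc t (t + 1),
      (Real.sqrt (2 * Real.pi))⁻¹ * Real.exp (-(t + 1) ^ 2 / 2) ≤ gaussianPDFReal 0 1 x := by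
    intro x hx
    rw [pdf1_eq]
    apply mul_le_mul_of_nonneg_left _ (by positivity)
    apply Real.exp_le_exp.mpr
    have h1 := hx.1; have h2 := hx.2
    nlinarith
  calc (Real.sqrt (2 * Real.pi))⁻¹ * Real.exp (-(t + 1) ^ 2 / 2)
      = ∫ _x in Icc t (t + 1), (Real.sqrt (2 * Real.pi))⁻¹ * Real.exp (-(t + 1) ^ 2 / 2) := by
        rw [setIntegral_const]
        rw [Real.volume_real_Icc]
        simp
    _ ≤ ∫ x in Icc t (t + 1), gaussianPDFReal 0 1 x := by
        apply setIntegral_mono_on (integrableOn_const (by simp [Real.volume_Icc]))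
          (hint.mono_set Icc_subset_Ici_self) measurableSet_Icc h2

lemma tendsto_nu_Ici : Tendsto (fun t : ℝ => (nu (Ici t)).toReal) atTop (𝓝 0) := by
  have h : Tendsto (fun t : ℝ => nu (Ici t)) atTop (𝓝 (nu (⋂ t : ℝ, Ici t))) := by
    apply tendsto_measure_iInter_atTop
    · exact fun t => measurableSet_Ici.nullMeasurableSet
    · intro t₁ t₂ h; exact Ici_subset_Ici.mpr h
    · exact ⟨0, measure_ne_top _ _⟩
  have he : (⋂ t : ℝ, Ici t) = ∅ := by
    rw [eq_empty_iff_forall_notMem]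
    intro x hx
    simp only [mem_iInter, mem_Ici] at hx
    obtain ⟨k, hk⟩ := exists_gt x
    exact absurd (hx k) (not_le.mpr hk)
  rw [he] at h
  simp only [measure_empty] at h
  have := (ENNReal.tendsto_toReal (by simp : (0:ℝ≥0∞) ≠ ⊤)).comp h
  simpa [Function.comp_def] using this

lemma tendsto_nu_Iic : Tendsto (fun t : ℝ => (nu (Iic (-t))).toReal) atTop (𝓝 0) := by
  have h : Tendsto (fun t : ℝ => nu (Iic (-t))) atTop (𝓝 (nu (⋂ t : ℝ, Iic (-t)))) := by
    apply tendsto_measure_iInter_atTop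
    · exact fun t => measurableSet_Iic.nullMeasurableSet
    · intro t₁ t₂ h; exact Iic_subset_Iic.mpr (by linarith)
    · exact ⟨0, measure_ne_top _ _⟩
  have he : (⋂ t : ℝ, Iic (-t)) = ∅ := by
    rw [eq_empty_iff_forall_notMem]
    intro x hx
    simp only [mem_iInter, mem_Iic] at hx
    obtain ⟨k, hk⟩ := exists_gt (-x)
    have := hx k
    linarith
  rw [he] at h
  simp only [measure_empty] at h
  have := (ENNReal.tendsto_toReal (by simp : (0:ℝ≥0∞) ≠ ⊤)).comp h
  simpa [Function.comp_def] using this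

-- chunk 3
lemma ms_eval (n : ℕ) (i : Fin n) {A : Set ℝ} (hA : MeasurableSet A) :
    MeasurableSet {e : Fin n → ℝ | e i ∈ A} :=
  (measurable_pi_apply i) hA

lemma integral_ind_eval (n : ℕ) (i : Fin n) {A : Set ℝ} (hA : MeasurableSet A) :
    ∫ e, (if e i ∈ A then (1:ℝ) else 0) ∂(noise n) = (nu A).toReal := by
  rw [integral_ind _ (ms_eval n i hA), noise_eval n i hA]

lemma integral_ind_eval_pair (n : ℕ) {i j : Fin n} (hij : i ≠ j) {A : Set ℝ}
    (hA : MeasurableSet A) :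
    ∫ e, (if e i ∈ A ∧ e j ∈ A then (1:ℝ) else 0) ∂(noise n) = (nu A).toReal ^ 2 := by
  have hm : MeasurableSet {e : Fin n → ℝ | e i ∈ A ∧ e j ∈ A} :=
    (ms_eval n i hA).inter (ms_eval n j hA)
  rw [integral_ind _ hm, noise_eval_pair n i j hij hA hA, ENNReal.toReal_mul]
  ring

lemma integrable_ind (n : ℕ) {P : (Fin n → ℝ) → Prop} [DecidablePred P] (h : MeasurableSet {e | P e}) :
    Integrable (fun e => if P e then (1:ℝ) else 0) (noise n) :=
  integrable_of_bdd (C := 1) (measurable_ind h).aestronglyMeasurable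
    (fun e => by by_cases hp : P e <;> simp [hp])

lemma integral_ind_le (n : ℕ) (i : Fin n) (t : ℝ) :
    ∫ e, (if t ≤ e i then (1:ℝ) else 0) ∂(noise n) = (nu (Ici t)).toReal := by
  have h := integral_ind (noise n) (P := fun e : Fin n → ℝ => t ≤ e i)
    (ms_eval n i measurableSet_Ici)
  rw [h]
  have hset : {a : Fin n → ℝ | t ≤ a i} = {e : Fin n → ℝ | e i ∈ Ici t} := rfl
  rw [hset, noise_eval n i measurableSet_Ici]

lemma integral_ind_le_pair (n : ℕ) {i j : Fin n} (hij : i ≠ j) (t : ℝ) :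
    ∫ e, (if t ≤ e i ∧ t ≤ e j then (1:ℝ) else 0) ∂(noise n) = (nu (Ici t)).toReal ^ 2 := by
  have h := integral_ind (noise n) (P := fun e : Fin n → ℝ => t ≤ e i ∧ t ≤ e j)
    ((ms_eval n i measurableSet_Ici).inter (ms_eval n j measurableSet_Ici))
  rw [h]
  have hset : {a : Fin n → ℝ | t ≤ a i ∧ t ≤ a j} = {e : Fin n → ℝ | e i ∈ Ici t ∧ e j ∈ Ici t} := rfl
  rw [hset, noise_eval_pair n i j hij measurableSet_Ici measurableSet_Ici, ENNReal.toReal_mul]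
  ring

lemma var_bound (n : ℕ) (T : Finset (Fin n)) (t : ℝ) :
    ∫ e, (∑ i ∈ T, (if t ≤ e i then (1:ℝ) else 0) - T.card * (nu (Ici t)).toReal) ^ 2 ∂(noise n)
      ≤ T.card * (nu (Ici t)).toReal := by
  set p := (nu (Ici t)).toReal with hp
  have hp0 : 0 ≤ p := ENNReal.toReal_nonneg
  have hp1 : p ≤ 1 := by
    rw [hp]
    exact ENNReal.toReal_le_of_le_ofReal zero_le_one (by simpa using prob_le_one)
  have hmsi : ∀ i : Fin n, MeasurableSet {e : Fin n → ℝ | t ≤ e i} := by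
    intro i
    exact ms_eval n i measurableSet_Ici
  have hindint : ∀ i : Fin n, Integrable (fun e => if t ≤ e i then (1:ℝ) else 0) (noise n) :=
    fun i => integrable_ind n (hmsi i)
  -- rewrite integrand as a double sum
  have hrw : ∀ e : Fin n → ℝ,
      (∑ i ∈ T, (if t ≤ e i then (1:ℝ) else 0) - T.card * p) ^ 2 =
      ∑ i ∈ T, ∑ j ∈ T, ((if t ≤ e i then (1:ℝ) else 0) - p) * ((if t ≤ e j then (1:ℝ) else 0) - p) := by
    intro e
    have h1 : (∑ i ∈ T, (if t ≤ e i then (1:ℝ) else 0)) - T.card * p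
        = ∑ i ∈ T, ((if t ≤ e i then (1:ℝ) else 0) - p) := by
      rw [Finset.sum_sub_distrib, Finset.sum_const, nsmul_eq_mul]
    rw [h1, sq, Finset.sum_mul_sum]
  have hterm_int : ∀ i j : Fin n, Integrable
      (fun e => ((if t ≤ e i then (1:ℝ) else 0) - p) * ((if t ≤ e j then (1:ℝ) else 0) - p))
      (noise n) := by
    intro i j
    apply integrable_of_bdd (C := (1 + p) * (1 + p))
    · exact (((measurable_ind (hmsi i)).sub measurable_const).mul
        ((measurable_ind (hmsi j)).sub measurable_const)).aestronglyMeasurable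
    · intro e
      rw [abs_mul]
      have hb : ∀ k : Fin n, |(if t ≤ e k then (1:ℝ) else 0) - p| ≤ 1 + p := by
        intro k
        by_cases h : t ≤ e k
        · rw [if_pos h, abs_le]; constructor <;> linarith
        · rw [if_neg h, abs_le]; constructor <;> linarith
      exact mul_le_mul (hb i) (hb j) (abs_nonneg _) (by linarith)
  calc ∫ e, (∑ i ∈ T, (if t ≤ e i then (1:ℝ) else 0) - T.card * p) ^ 2 ∂(noise n)
      = ∑ i ∈ T, ∑ j ∈ T, ∫ e,
          ((if t ≤ e i then (1:ℝ) else 0) - p) * ((if t ≤ e j then (1:ℝ) else 0) - p) ∂(noise n) := by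
        have hcong : ∫ e, (∑ i ∈ T, (if t ≤ e i then (1:ℝ) else 0) - T.card * p) ^ 2 ∂(noise n)
            = ∫ e, (∑ i ∈ T, ∑ j ∈ T, ((if t ≤ e i then (1:ℝ) else 0) - p) *
              ((if t ≤ e j then (1:ℝ) else 0) - p)) ∂(noise n) :=
          integral_congr_ae (ae_of_all _ hrw)
        rw [hcong,
          integral_finset_sum T (fun i _ => integrable_finset_sum T (fun j _ => hterm_int i j))]
        exact Finset.sum_congr rfl (fun i _ => integral_finset_sum T (fun j _ => hterm_int i j))
    _ = ∑ i ∈ T, ∑ j ∈ T, (if i = j then p - p ^ 2 else 0) := by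
        refine Finset.sum_congr rfl (fun i _ => Finset.sum_congr rfl (fun j _ => ?_))
        rcases eq_or_ne i j with rfl | hij
        · rw [if_pos rfl]
          have : (fun e : Fin n → ℝ => ((if t ≤ e i then (1:ℝ) else 0) - p) * ((if t ≤ e i then (1:ℝ) else 0) - p))
              = fun e : Fin n → ℝ => (1 - 2 * p) * (if t ≤ e i then (1:ℝ) else 0) + p ^ 2 := by
            funext e
            by_cases h : t ≤ e i <;> simp [h] <;> ring
          rw [this, integral_add ((hindint i).const_mul _) (integrable_const _),
            integral_const_mul, integral_ind_le n i t]
          simp only [integral_const, measureReal_def, measure_univ, ENNReal.toReal_one, one_smul, smul_eq_mul]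
          ring
        · rw [if_neg hij]
          have : (fun e : Fin n → ℝ => ((if t ≤ e i then (1:ℝ) else 0) - p) * ((if t ≤ e j then (1:ℝ) else 0) - p))
              = fun e : Fin n → ℝ => (if t ≤ e i ∧ t ≤ e j then (1:ℝ) else 0)
                  - p * (if t ≤ e i then (1:ℝ) else 0) - p * (if t ≤ e j then (1:ℝ) else 0) + p ^ 2 := by
            funext e
            by_cases h1 : t ≤ e i <;> by_cases h2 : t ≤ e j <;> simp [h1, h2] <;> ring
          rw [this]
          have hpair : Integrable (fun e => if t ≤ e i ∧ t ≤ e j then (1:ℝ) else 0) (noise n) :=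
            integrable_ind n ((hmsi i).inter (hmsi j))
          have h1 : Integrable (fun e : Fin n → ℝ => (if t ≤ e i ∧ t ≤ e j then (1:ℝ) else 0)
              - p * (if t ≤ e i then (1:ℝ) else 0)) (noise n) :=
            hpair.sub ((hindint i).const_mul p)
          have h2 : Integrable (fun e : Fin n → ℝ => (if t ≤ e i ∧ t ≤ e j then (1:ℝ) else 0)
              - p * (if t ≤ e i then (1:ℝ) else 0) - p * (if t ≤ e j then (1:ℝ) else 0)) (noise n) :=
            h1.sub ((hindint j).const_mul p)
          rw [integral_add h2 (integrable_const _),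
            integral_sub h1 ((hindint j).const_mul p),
            integral_sub hpair ((hindint i).const_mul p),
            integral_const_mul, integral_const_mul,
            integral_ind_le n i t, integral_ind_le n j t, integral_ind_le_pair n hij t]
          simp only [integral_const, measureReal_def, measure_univ, ENNReal.toReal_one, one_smul, smul_eq_mul]
          ring
    _ = T.card * (p - p ^ 2) := by
        rw [Finset.sum_congr rfl (fun i hi => Finset.sum_ite_eq T i (fun _ => p - p ^ 2) |>.trans (if_pos hi))]
        rw [Finset.sum_const, nsmul_eq_mul]
    _ ≤ T.card * p := by nlinarith [sq_nonneg p, Nat.cast_nonneg (α := ℝ) T.card]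

lemma measurable_count (n : ℕ) (T : Finset (Fin n)) (t : ℝ) :
    Measurable (fun e : Fin n → ℝ => ∑ i ∈ T, (if t ≤ e i then (1:ℝ) else 0)) :=
  Finset.measurable_sum T (fun i _ => measurable_ind (ms_eval n i measurableSet_Ici))

lemma count_nonneg {n : ℕ} (T : Finset (Fin n)) (t : ℝ) (e : Fin n → ℝ) :
    0 ≤ ∑ i ∈ T, (if t ≤ e i then (1:ℝ) else 0) :=
  Finset.sum_nonneg (fun i _ => by positivity)

lemma count_le {n : ℕ} (T : Finset (Fin n)) (t : ℝ) (e : Fin n → ℝ) :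
    ∑ i ∈ T, (if t ≤ e i then (1:ℝ) else 0) ≤ T.card := by
  calc ∑ i ∈ T, (if t ≤ e i then (1:ℝ) else 0) ≤ ∑ _i ∈ T, (1:ℝ) :=
        Finset.sum_le_sum (fun i _ => by by_cases h : t ≤ e i <;> simp [h])
    _ = T.card := by simp

lemma count_lower (n : ℕ) (T : Finset (Fin n)) (t : ℝ) :
    (noise n {e | ∑ i ∈ T, (if t ≤ e i then (1:ℝ) else 0)
        < T.card * (nu (Ici t)).toReal / 2}).toReal
      ≤ 4 / (T.card * (nu (Ici t)).toReal) := by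
  set p := (nu (Ici t)).toReal with hp
  have hp0 : 0 ≤ p := ENNReal.toReal_nonneg
  set M := (T.card : ℝ) * p with hM
  have hM0 : 0 ≤ M := by positivity
  have hNmeas := measurable_count n T t
  have hev : MeasurableSet {e : Fin n → ℝ | ∑ i ∈ T, (if t ≤ e i then (1:ℝ) else 0) < M / 2} :=
    measurableSet_lt hNmeas measurable_const
  rcases eq_or_lt_of_le hM0 with h0 | hMpos
  · have hempty : {e : Fin n → ℝ | ∑ i ∈ T, (if t ≤ e i then (1:ℝ) else 0) < M / 2} = ∅ := by
      rw [eq_empty_iff_forall_notMem]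
      intro e he
      simp only [mem_setOf_eq] at he
      have := count_nonneg T t e
      rw [← h0] at he
      linarith
    rw [hempty]
    simp only [measure_empty, ENNReal.toReal_zero]
    exact div_nonneg (by norm_num) hM0
  · have hkey : (noise n {e | ∑ i ∈ T, (if t ≤ e i then (1:ℝ) else 0) < M / 2}).toReal
        ≤ (∫ e, (∑ i ∈ T, (if t ≤ e i then (1:ℝ) else 0) - M) ^ 2 ∂(noise n)) / (M / 2) ^ 2 := by
      rw [← integral_ind (noise n) hev]
      have hint2 : Integrable
          (fun e : Fin n → ℝ => (∑ i ∈ T, (if t ≤ e i then (1:ℝ) else 0) - M) ^ 2) (noise n) := by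
        apply integrable_of_bdd (C := ((T.card : ℝ) + M) ^ 2)
        · exact ((hNmeas.sub measurable_const).pow measurable_const).aestronglyMeasurable
        · intro e
          rw [abs_le]
          constructor
          · nlinarith [sq_nonneg (∑ i ∈ T, (if t ≤ e i then (1:ℝ) else 0) - M),
              Nat.cast_nonneg (α := ℝ) T.card]
          · nlinarith [count_nonneg T t e, count_le T t e]
      rw [show (fun e : Fin n → ℝ => (∑ i ∈ T, (if t ≤ e i then (1:ℝ) else 0) - M) ^ 2) = fun e =>
          (∑ i ∈ T, (if t ≤ e i then (1:ℝ) else 0) - M) ^ 2 from rfl] at hint2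
      rw [← integral_div]
      apply integral_mono (integrable_ind n hev) (hint2.div_const _)
      intro e
      dsimp only
      by_cases h : ∑ i ∈ T, (if t ≤ e i then (1:ℝ) else 0) < M / 2
      · rw [if_pos h]
        rw [le_div_iff₀ (by positivity)]
        nlinarith [count_nonneg T t e]
      · rw [if_neg h]
        positivity
    refine hkey.trans ?_
    have hvb := var_bound n T t
    rw [← hp, ← hM] at hvb
    have : (M / 2) ^ 2 > 0 := by positivity
    calc (∫ e, (∑ i ∈ T, (if t ≤ e i then (1:ℝ) else 0) - M) ^ 2 ∂(noise n)) / (M / 2) ^ 2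
        ≤ M / (M / 2) ^ 2 := by gcongr
      _ = 4 / M := by field_simp; ring
lemma FDP_nonneg (n : ℕ) (θ : Fin n → ℝ) (φ : (Fin n → ℝ) → Fin n → Prop) (x : Fin n → ℝ) :
    0 ≤ FDP n θ φ x := by
  unfold FDP
  apply div_nonneg (Finset.sum_nonneg (fun i _ => by positivity))
  exact le_trans zero_le_one (le_max_left _ _)

lemma FDP_le_one (n : ℕ) (θ : Fin n → ℝ) (φ : (Fin n → ℝ) → Fin n → Prop) (x : Fin n → ℝ) :
    FDP n θ φ x ≤ 1 := by
  unfold FDP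
  rw [div_le_one (lt_of_lt_of_le zero_lt_one (le_max_left _ _))]
  refine le_trans (Finset.sum_le_sum (fun i _ => ?_)) (le_max_right _ _)
  by_cases h1 : φ x i <;> by_cases h2 : θ i = 0 <;> simp [h1, h2]

lemma FNP_nonneg (n : ℕ) (θ : Fin n → ℝ) (φ : (Fin n → ℝ) → Fin n → Prop) (x : Fin n → ℝ) :
    0 ≤ FNP n θ φ x := by
  unfold FNP
  apply div_nonneg (Finset.sum_nonneg (fun i _ => by positivity))
  exact le_trans zero_le_one (le_max_left _ _)

lemma FNP_le_one (n : ℕ) (θ : Fin n → ℝ) (φ : (Fin n → ℝ) → Fin n → Prop) (x : Fin n → ℝ) :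
    FNP n θ φ x ≤ 1 := by
  unfold FNP
  rw [div_le_one (lt_of_lt_of_le zero_lt_one (le_max_left _ _))]
  refine le_trans (Finset.sum_le_sum (fun i _ => ?_)) (le_max_right _ _)
  by_cases h1 : φ x i <;> by_cases h2 : θ i ≠ 0 <;> simp [h1, h2]

lemma card_filter_lt (n sn : ℕ) (hsn : sn ≤ n) :
    (Finset.univ.filter (fun i : Fin n => (i : ℕ) < sn)).card = sn := by
  have h : (Finset.univ.filter (fun i : Fin n => (i : ℕ) < sn)).card = (Finset.range sn).card := by
    exact Finset.card_bij' (fun (a : Fin n) _ => (a : ℕ))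
      (fun (b : ℕ) hb => (⟨b, lt_of_lt_of_le (Finset.mem_range.mp hb) hsn⟩ : Fin n))
      (fun a ha => Finset.mem_range.mpr (Finset.mem_filter.mp ha).2)
      (fun b hb => by
        simp only [Finset.mem_filter, Finset.mem_univ, true_and]
        exact Finset.mem_range.mp hb)
      (fun a ha => rfl) (fun b hb => rfl)
  rw [h, Finset.card_range]

set_option maxHeartbeats 1000000 in
lemma core (n sn : ℕ) (hs1 : 1 ≤ sn) (hsn : sn ≤ n) (μ ts : ℝ) (hμ : 0 < μ) (hμts : μ < ts)
    (φ : (Fin n → ℝ) → Fin n → Prop) (hφ : IsThresholding n φ)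
    (hc : 1 ≤ ((n : ℝ) - sn) * (nu (Ici ts)).toReal / 2) :
    ((n : ℝ) - sn) * (nu (Ici ts)).toReal / 2 /
        (((n : ℝ) - sn) * (nu (Ici ts)).toReal / 2 + sn)
      - 4 / (((n : ℝ) - sn) * (nu (Ici ts)).toReal)
      - ((nu (Ici (ts - μ))).toReal + (nu (Iic (-μ))).toReal)
    ≤ FDR n (fun i => if (i : ℕ) < sn then μ else 0) φ
      + FNR n (fun i => if (i : ℕ) < sn then μ else 0) φ := by
  obtain ⟨τ₁, τ₂, hτ₁m, hτ₂m, hτpos, hφiff⟩ := hφ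
  set θ₀ : Fin n → ℝ := fun i => if (i : ℕ) < sn then μ else 0 with hθ₀
  set p := (nu (Ici ts)).toReal with hpdef
  set c := ((n : ℝ) - sn) * p / 2 with hcdef
  set q := (nu (Ici (ts - μ))).toReal + (nu (Iic (-μ))).toReal with hqdef
  set x : (Fin n → ℝ) → (Fin n → ℝ) := fun e i => θ₀ i + e i with hxdef
  have hsnpos : (0:ℝ) < sn := by exact_mod_cast hs1
  have hcpos : (0:ℝ) < c := lt_of_lt_of_le zero_lt_one hc
  have hxm : Measurable x :=
    measurable_pi_lambda _ (fun i => show Measurable (fun e : Fin n → ℝ => θ₀ i + e i) from by fun_prop)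
  have hxim : ∀ i : Fin n, Measurable (fun e : Fin n → ℝ => x e i) :=
    fun i => show Measurable (fun e : Fin n → ℝ => θ₀ i + e i) from by fun_prop
  have hφms : ∀ i : Fin n, MeasurableSet {e : Fin n → ℝ | φ (x e) i} := by
    intro i
    have hset : {e : Fin n → ℝ | φ (x e) i}
        = {e | τ₁ (x e) ≤ x e i} ∪ {e | τ₂ (x e) ≤ -(x e i)} := by
      ext e
      simp only [Set.mem_setOf_eq, Set.mem_union]
      exact hφiff (x e) i
    rw [hset]
    exact (measurableSet_le (hτ₁m.comp hxm) (hxim i)).union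
      (measurableSet_le (hτ₂m.comp hxm) (hxim i).neg)
  have hθsupp : ∀ i : Fin n, θ₀ i ≠ 0 ↔ (i : ℕ) < sn := by
    intro i
    by_cases h : (i:ℕ) < sn <;> simp [hθ₀, h, hμ.ne']
  set S := Finset.univ.filter (fun i : Fin n => (i:ℕ) < sn) with hS
  set T := Finset.univ.filter (fun i : Fin n => ¬ (i:ℕ) < sn) with hT
  have hScard : S.card = sn := card_filter_lt n sn hsn
  have hTcard : (T.card : ℝ) = (n : ℝ) - sn := by
    have h1 : S.card + T.card = n := by
      rw [hS, hT]
      rw [Finset.card_filter_add_card_filter_not (p := fun i : Fin n => (i:ℕ) < sn)]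
      simp
    have h2 : T.card = n - sn := by omega
    rw [h2, Nat.cast_sub hsn]
  have hfiltereq : Finset.univ.filter (fun i : Fin n => θ₀ i ≠ 0) = S := by
    apply Finset.filter_congr
    intro i _
    rw [hθsupp i]
  have hdenFNP : (∑ i : Fin n, if θ₀ i ≠ 0 then (1:ℝ) else 0) = sn := by
    rw [Finset.sum_boole, hfiltereq, hScard]
  have hθS : ∀ i ∈ S, θ₀ i = μ := by
    intro i hi
    exact if_pos (Finset.mem_filter.mp hi).2
  have hθT : ∀ i ∈ T, θ₀ i = 0 := by
    intro i hi
    exact if_neg (Finset.mem_filter.mp hi).2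
  -- measurable events
  have hE1 : MeasurableSet {e : Fin n → ℝ | τ₁ (x e) ≤ ts} :=
    measurableSet_le (hτ₁m.comp hxm) measurable_const
  have hE1c : MeasurableSet {e : Fin n → ℝ | ts < τ₁ (x e)} :=
    measurableSet_lt measurable_const (hτ₁m.comp hxm)
  have hbad : ∀ i : Fin n, MeasurableSet {e : Fin n → ℝ | e i ≤ -μ ∨ ts - μ ≤ e i} :=
    fun i => (ms_eval n i measurableSet_Iic).union (ms_eval n i measurableSet_Ici)
  have hNm : Measurable (fun e : Fin n → ℝ => ∑ i ∈ T, if ts ≤ e i then (1:ℝ) else 0) :=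
    measurable_count n T ts
  have hEB : MeasurableSet {e : Fin n → ℝ |
      τ₁ (x e) ≤ ts ∧ c ≤ ∑ i ∈ T, if ts ≤ e i then (1:ℝ) else 0} :=
    hE1.inter (measurableSet_le measurable_const hNm)
  have hEN : MeasurableSet {e : Fin n → ℝ | (∑ i ∈ T, if ts ≤ e i then (1:ℝ) else 0) < c} :=
    measurableSet_lt hNm measurable_const
  -- pointwise claim A (FNP)
  have claimA : ∀ e : Fin n → ℝ,
      (if ts < τ₁ (x e) then (1:ℝ) else 0)
        - (∑ i ∈ S, if e i ≤ -μ ∨ ts - μ ≤ e i then (1:ℝ) else 0) / sn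
      ≤ FNP n θ₀ φ (x e) := by
    intro e
    have hB0 : 0 ≤ (∑ i ∈ S, if e i ≤ -μ ∨ ts - μ ≤ e i then (1:ℝ) else 0) :=
      Finset.sum_nonneg (fun i _ => by positivity)
    by_cases h : ts < τ₁ (x e)
    · rw [if_pos h]
      unfold FNP
      rw [hdenFNP, max_eq_right (by exact_mod_cast hs1 : (1:ℝ) ≤ sn)]
      have hkey : (sn:ℝ) - (∑ i ∈ S, if e i ≤ -μ ∨ ts - μ ≤ e i then (1:ℝ) else 0)
          ≤ ∑ i : Fin n, if θ₀ i ≠ 0 ∧ ¬ φ (x e) i then (1:ℝ) else 0 := by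
        have h1 : ∀ i ∈ S, (1:ℝ) - (if e i ≤ -μ ∨ ts - μ ≤ e i then (1:ℝ) else 0)
            ≤ (if θ₀ i ≠ 0 ∧ ¬ φ (x e) i then (1:ℝ) else 0) := by
          intro i hi
          have hθi : θ₀ i = μ := hθS i hi
          by_cases hb : e i ≤ -μ ∨ ts - μ ≤ e i
          · rw [if_pos hb]
            simp only [sub_self]
            positivity
          · rw [if_neg hb]
            push_neg at hb
            have hxei : x e i = μ + e i := by
              simp only [hxdef, hθi]
            have hφn : ¬ φ (x e) i := by
              rw [hφiff (x e) i]
              push_neg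
              constructor
              · rw [hxei]; linarith [hb.2]
              · have h2 := (hτpos (x e)).2
                rw [hxei]; linarith [hb.1]
            rw [if_pos ⟨by rw [hθi]; exact hμ.ne', hφn⟩]
            norm_num
        calc (sn:ℝ) - (∑ i ∈ S, if e i ≤ -μ ∨ ts - μ ≤ e i then (1:ℝ) else 0)
            = ∑ i ∈ S, ((1:ℝ) - (if e i ≤ -μ ∨ ts - μ ≤ e i then (1:ℝ) else 0)) := by
              rw [Finset.sum_sub_distrib, Finset.sum_const, hScard, nsmul_eq_mul, mul_one]
          _ ≤ ∑ i ∈ S, (if θ₀ i ≠ 0 ∧ ¬ φ (x e) i then (1:ℝ) else 0) := Finset.sum_le_sum h1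
          _ ≤ ∑ i : Fin n, if θ₀ i ≠ 0 ∧ ¬ φ (x e) i then (1:ℝ) else 0 :=
              Finset.sum_le_sum_of_subset_of_nonneg (Finset.subset_univ S)
                (fun i _ _ => by positivity)
      have hstep : ((sn:ℝ) - (∑ i ∈ S, if e i ≤ -μ ∨ ts - μ ≤ e i then (1:ℝ) else 0)) / sn
          ≤ (∑ i : Fin n, if θ₀ i ≠ 0 ∧ ¬ φ (x e) i then (1:ℝ) else 0) / sn :=
        (div_le_div_iff_of_pos_right hsnpos).mpr hkey
      calc (1:ℝ) - (∑ i ∈ S, if e i ≤ -μ ∨ ts - μ ≤ e i then (1:ℝ) else 0) / sn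
          = ((sn:ℝ) - (∑ i ∈ S, if e i ≤ -μ ∨ ts - μ ≤ e i then (1:ℝ) else 0)) / sn := by
            rw [sub_div, div_self (ne_of_gt hsnpos)]
        _ ≤ _ := hstep
    · rw [if_neg h]
      have := FNP_nonneg n θ₀ φ (x e)
      have hZ : 0 ≤ (∑ i ∈ S, if e i ≤ -μ ∨ ts - μ ≤ e i then (1:ℝ) else 0) / sn :=
        div_nonneg hB0 (le_of_lt hsnpos)
      linarith
  -- pointwise claim B (FDP)
  have claimB : ∀ e : Fin n → ℝ,
      (c / (c + sn)) * (if τ₁ (x e) ≤ ts ∧ c ≤ (∑ i ∈ T, if ts ≤ e i then (1:ℝ) else 0)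
          then (1:ℝ) else 0)
      ≤ FDP n θ₀ φ (x e) := by
    intro e
    by_cases h : τ₁ (x e) ≤ ts ∧ c ≤ ∑ i ∈ T, if ts ≤ e i then (1:ℝ) else 0
    · rw [if_pos h, mul_one]
      obtain ⟨h1, h2⟩ := h
      have hNV : (∑ i ∈ T, if ts ≤ e i then (1:ℝ) else 0)
          ≤ ∑ i : Fin n, if θ₀ i = 0 ∧ φ (x e) i then (1:ℝ) else 0 := by
        refine le_trans (Finset.sum_le_sum ?_)
          (Finset.sum_le_sum_of_subset_of_nonneg (Finset.subset_univ T)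
            (fun i _ _ => by positivity))
        intro i hi
        have hθi : θ₀ i = 0 := hθT i hi
        by_cases hts : ts ≤ e i
        · rw [if_pos hts, if_pos]
          refine ⟨hθi, ?_⟩
          rw [hφiff (x e) i]
          left
          have hxei : x e i = e i := by
            simp only [hxdef, hθi, zero_add]
          rw [hxei]; linarith
        · rw [if_neg hts]; positivity
      set V := ∑ i : Fin n, if θ₀ i = 0 ∧ φ (x e) i then (1:ℝ) else 0 with hV
      have hVc : c ≤ V := le_trans h2 hNV
      have hV1 : (1:ℝ) ≤ V := le_trans hc hVc
      set D := ∑ i : Fin n, if φ (x e) i then (1:ℝ) else 0 with hD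
      have hDVs : D ≤ V + sn := by
        have hle : D ≤ ∑ i : Fin n, ((if θ₀ i = 0 ∧ φ (x e) i then (1:ℝ) else 0)
            + (if θ₀ i ≠ 0 then (1:ℝ) else 0)) := by
          apply Finset.sum_le_sum
          intro i _
          by_cases hz : θ₀ i = 0 <;> by_cases hp : φ (x e) i <;> simp [hz, hp]
        rwa [Finset.sum_add_distrib, hdenFNP] at hle
      have hmaxle : max (1:ℝ) D ≤ V + sn := max_le (by linarith) hDVs
      have hmaxpos : (0:ℝ) < max 1 D := lt_of_lt_of_le zero_lt_one (le_max_left _ _)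
      unfold FDP
      calc c / (c + sn) ≤ V / (V + sn) := by
            rw [div_le_div_iff₀ (by positivity) (by positivity)]
            nlinarith [hsnpos.le]
        _ ≤ V / max 1 D := by
            apply div_le_div_of_nonneg_left (by linarith) hmaxpos hmaxle
        _ = _ := by rw [hV, hD]
    · rw [if_neg h, mul_zero]
      exact FDP_nonneg n θ₀ φ (x e)
  -- measurability and integrability of FNP/FDP along x
  have hFNPm : Measurable (fun e => FNP n θ₀ φ (x e)) := by
    unfold FNP
    apply Measurable.div
    · apply Finset.measurable_sum
      intro i _
      apply measurable_ind
      exact (MeasurableSet.const _).inter (hφms i).compl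
    · exact measurable_const
  have hFDPm : Measurable (fun e => FDP n θ₀ φ (x e)) := by
    unfold FDP
    apply Measurable.div
    · apply Finset.measurable_sum
      intro i _
      apply measurable_ind
      exact (MeasurableSet.const _).inter (hφms i)
    · exact measurable_const.max (Finset.measurable_sum _
        (fun i _ => measurable_ind (hφms i)))
  have hFNPint : Integrable (fun e => FNP n θ₀ φ (x e)) (noise n) :=
    integrable_of_bdd (C := 1) hFNPm.aestronglyMeasurable
      (fun e => abs_le.mpr ⟨by linarith [FNP_nonneg n θ₀ φ (x e)], FNP_le_one n θ₀ φ (x e)⟩)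
  have hFDPint : Integrable (fun e => FDP n θ₀ φ (x e)) (noise n) :=
    integrable_of_bdd (C := 1) hFDPm.aestronglyMeasurable
      (fun e => abs_le.mpr ⟨by linarith [FDP_nonneg n θ₀ φ (x e)], FDP_le_one n θ₀ φ (x e)⟩)
  -- probabilities
  set P1 := (noise n {e : Fin n → ℝ | τ₁ (x e) ≤ ts}).toReal with hP1
  set P1c := (noise n {e : Fin n → ℝ | ts < τ₁ (x e)}).toReal with hP1c
  set PB := (noise n {e : Fin n → ℝ |
      τ₁ (x e) ≤ ts ∧ c ≤ ∑ i ∈ T, if ts ≤ e i then (1:ℝ) else 0}).toReal with hPB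
  set PN := (noise n {e : Fin n → ℝ |
      (∑ i ∈ T, if ts ≤ e i then (1:ℝ) else 0) < c}).toReal with hPN
  have hP1nn : 0 ≤ P1 := ENNReal.toReal_nonneg
  have hP1le : P1 ≤ 1 := by
    rw [hP1]
    exact ENNReal.toReal_le_of_le_ofReal zero_le_one (by simpa using prob_le_one)
  have hPNnn : 0 ≤ PN := ENNReal.toReal_nonneg
  have hPBnn : 0 ≤ PB := ENNReal.toReal_nonneg
  -- FNR lower bound
  have hQle : ∀ i ∈ S, ∫ e, (if e i ≤ -μ ∨ ts - μ ≤ e i then (1:ℝ) else 0) ∂(noise n) ≤ q := by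
    intro i _
    have h1 := integral_ind (noise n) (P := fun e : Fin n → ℝ => e i ≤ -μ ∨ ts - μ ≤ e i) (hbad i)
    rw [h1]
    have hseteq : {e : Fin n → ℝ | e i ≤ -μ ∨ ts - μ ≤ e i}
        = {e : Fin n → ℝ | e i ∈ Iic (-μ) ∪ Ici (ts - μ)} := rfl
    rw [hseteq, noise_eval n i (measurableSet_Iic.union measurableSet_Ici)]
    have hle : nu (Iic (-μ) ∪ Ici (ts - μ)) ≤ nu (Iic (-μ)) + nu (Ici (ts - μ)) :=
      measure_union_le _ _
    have := ENNReal.toReal_mono (by finiteness) hle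
    rw [ENNReal.toReal_add (by finiteness) (by finiteness)] at this
    rw [hqdef]
    linarith
  have hFNRge : P1c - q ≤ FNR n θ₀ φ := by
    have hdef : FNR n θ₀ φ = ∫ e, FNP n θ₀ φ (x e) ∂(noise n) := rfl
    rw [hdef]
    have hint1 : Integrable (fun e : Fin n → ℝ => (if ts < τ₁ (x e) then (1:ℝ) else 0)
        - (∑ i ∈ S, if e i ≤ -μ ∨ ts - μ ≤ e i then (1:ℝ) else 0) / sn) (noise n) :=
      (integrable_ind n hE1c).sub
        ((integrable_finset_sum S (fun i _ => integrable_ind n (hbad i))).div_const _)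
    have hmono := integral_mono hint1 hFNPint claimA
    have hlhs : ∫ e, ((if ts < τ₁ (x e) then (1:ℝ) else 0)
        - (∑ i ∈ S, if e i ≤ -μ ∨ ts - μ ≤ e i then (1:ℝ) else 0) / sn) ∂(noise n)
        = P1c - (∫ e, (∑ i ∈ S, if e i ≤ -μ ∨ ts - μ ≤ e i then (1:ℝ) else 0) ∂(noise n)) / sn := by
      rw [integral_sub (integrable_ind n hE1c)
        ((integrable_finset_sum S (fun i _ => integrable_ind n (hbad i))).div_const _),
        integral_div, integral_ind (noise n) hE1c]
    rw [hlhs] at hmono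
    have hZle : (∫ e, (∑ i ∈ S, if e i ≤ -μ ∨ ts - μ ≤ e i then (1:ℝ) else 0) ∂(noise n)) / sn
        ≤ q := by
      rw [integral_finset_sum S (fun i _ => integrable_ind n (hbad i))]
      rw [div_le_iff₀ hsnpos]
      calc ∑ i ∈ S, ∫ e, (if e i ≤ -μ ∨ ts - μ ≤ e i then (1:ℝ) else 0) ∂(noise n)
          ≤ ∑ _i ∈ S, q := Finset.sum_le_sum hQle
        _ = sn * q := by rw [Finset.sum_const, hScard, nsmul_eq_mul]
        _ ≤ q * sn := by ring_nf; rfl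
    linarith
  -- FDR lower bound
  have hFDRge : (c / (c + sn)) * PB ≤ FDR n θ₀ φ := by
    have hdef : FDR n θ₀ φ = ∫ e, FDP n θ₀ φ (x e) ∂(noise n) := rfl
    rw [hdef]
    have hint1 : Integrable (fun e : Fin n → ℝ => (c / (c + sn)) *
        (if τ₁ (x e) ≤ ts ∧ c ≤ (∑ i ∈ T, if ts ≤ e i then (1:ℝ) else 0) then (1:ℝ) else 0))
        (noise n) := (integrable_ind n hEB).const_mul _
    have hmono := integral_mono hint1 hFDPint claimB
    rwa [integral_const_mul, integral_ind (noise n) hEB] at hmono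
  -- PB ≥ P1 - PN
  have hPBge : P1 - PN ≤ PB := by
    have hpoint : ∀ e : Fin n → ℝ,
        (if τ₁ (x e) ≤ ts then (1:ℝ) else 0)
          - (if (∑ i ∈ T, if ts ≤ e i then (1:ℝ) else 0) < c then (1:ℝ) else 0)
        ≤ (if τ₁ (x e) ≤ ts ∧ c ≤ (∑ i ∈ T, if ts ≤ e i then (1:ℝ) else 0)
            then (1:ℝ) else 0) := by
      intro e
      by_cases h1 : τ₁ (x e) ≤ ts <;> by_cases h2 : c ≤ ∑ i ∈ T, if ts ≤ e i then (1:ℝ) else 0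
      · rw [if_pos h1, if_neg (not_lt.mpr h2), if_pos ⟨h1, h2⟩]; norm_num
      · rw [if_pos h1, if_pos (lt_of_not_ge h2), if_neg (by tauto)]; norm_num
      · rw [if_neg h1, if_neg (not_lt.mpr h2), if_neg (by tauto)]; norm_num
      · rw [if_neg h1, if_pos (lt_of_not_ge h2), if_neg (by tauto)]; norm_num
    have hint1 : Integrable (fun e : Fin n → ℝ => (if τ₁ (x e) ≤ ts then (1:ℝ) else 0)
        - (if (∑ i ∈ T, if ts ≤ e i then (1:ℝ) else 0) < c then (1:ℝ) else 0)) (noise n) :=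
      (integrable_ind n hE1).sub (integrable_ind n hEN)
    have hmono := integral_mono hint1 (integrable_ind n hEB) hpoint
    rwa [integral_sub (integrable_ind n hE1) (integrable_ind n hEN),
      integral_ind (noise n) hE1, integral_ind (noise n) hEN,
      integral_ind (noise n) hEB] at hmono
  -- PN small by Chebyshev
  have hPNle : PN ≤ 4 / (((n : ℝ) - sn) * p) := by
    have hcl := count_lower n T ts
    rw [hTcard] at hcl
    exact hcl
  -- P1 + P1c = 1
  have hsplit : P1c = 1 - P1 := by
    have h1 : P1 + P1c = 1 := by
      rw [hP1, hP1c, ← integral_ind (noise n) hE1, ← integral_ind (noise n) hE1c,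
        ← integral_add (integrable_ind n hE1) (integrable_ind n hE1c)]
      have hpt : ∀ e : Fin n → ℝ, (if τ₁ (x e) ≤ ts then (1:ℝ) else 0)
          + (if ts < τ₁ (x e) then (1:ℝ) else 0) = 1 := by
        intro e
        by_cases h : τ₁ (x e) ≤ ts
        · rw [if_pos h, if_neg (not_lt.mpr h)]; ring
        · rw [if_neg h, if_pos (lt_of_not_ge h)]; ring
      rw [integral_congr_ae (ae_of_all _ hpt)]
      simp
    linarith
  -- combine
  have hr0 : 0 ≤ c / (c + sn) := div_nonneg hcpos.le (by linarith)
  have hr1 : c / (c + sn) ≤ 1 := by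
    rw [div_le_one (by linarith)]
    linarith
  have hq0 : 0 ≤ q := by
    rw [hqdef]
    positivity
  have hFDR2 : (c / (c + sn)) * (P1 - PN) ≤ FDR n θ₀ φ := by
    refine le_trans ?_ hFDRge
    apply mul_le_mul_of_nonneg_left hPBge hr0
  have hFNR2 : (1 - P1) - q ≤ FNR n θ₀ φ := by
    rw [← hsplit]
    exact hFNRge
  have hkey2 : 0 ≤ (1 - c / (c + sn)) * ((1 - P1) + PN) :=
    mul_nonneg (by linarith) (by linarith)
  have hfinal : c / (c + sn) - 4 / (((n : ℝ) - sn) * p) - q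
      ≤ (c / (c + sn)) * (P1 - PN) + ((1 - P1) - q) := by
    nlinarith [hkey2]
  linarith

lemma sqrt_tendsto : Tendsto Real.sqrt atTop atTop := by
  rw [tendsto_atTop_atTop]
  intro b
  refine ⟨(max b 0) ^ 2, fun x hx => ?_⟩
  have h1 : Real.sqrt ((max b 0) ^ 2) ≤ Real.sqrt x := Real.sqrt_le_sqrt hx
  rw [Real.sqrt_sq (le_max_right b 0)] at h1
  exact le_trans (le_max_left b 0) h1

set_option maxHeartbeats 1000000 in
lemma eventually_good (a υ : ℝ) (ha : a < 1) (hυ : υ ∈ Set.Ioo (0:ℝ) 1)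
    (s : ℕ → ℕ) (hs1 : Tendsto s atTop atTop) (hs2 : ∀ n, (s n : ℝ) ≤ (n:ℝ) ^ υ)
    {ε : ℝ} (hε : 0 < ε) :
    ∀ᶠ n in atTop, ∀ φ : (Fin n → ℝ) → Fin n → Prop, IsThresholding n φ →
      ∃ θ₀ ∈ calL0 n (s n) a, 1 - ε ≤ FDR n θ₀ φ + FNR n θ₀ φ := by
  set aa := max a (1/2) with haa
  set ap := (aa + 1)/2 with hap
  have haa1 : aa < 1 := max_lt ha (by norm_num)
  have haa0 : (0:ℝ) < aa := lt_of_lt_of_le (by norm_num) (le_max_right _ _)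
  have hapa : aa < ap := by rw [hap]; linarith
  have hap1 : ap < 1 := by rw [hap]; linarith
  have hap0 : (0:ℝ) < ap := by rw [hap]; linarith
  set L : ℕ → ℝ := fun n => Real.log ((n:ℝ) / (s n : ℝ)) with hLdef
  set u : ℕ → ℝ := fun n => Real.sqrt (2 * L n) with hudef
  set K := (Real.sqrt (2 * Real.pi))⁻¹ with hK
  have hKpos : 0 < K := by rw [hK]; positivity
  set gf : ℝ → ℝ := fun v => v * ((1 - ap^2)/2 * v + (-ap)) + (-(1/2)) with hgf
  -- eventual basics
  have hE1 : ∀ᶠ n in atTop, 1 ≤ s n := hs1.eventually_ge_atTop 1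
  have hE2 : ∀ᶠ n in atTop, (s n : ℝ) ≤ (n:ℝ)/2 := by
    have h1 : Tendsto (fun y : ℝ => y ^ (-(1 - υ))) atTop (𝓝 0) :=
      tendsto_rpow_neg_atTop (by linarith [hυ.2] : (0:ℝ) < 1 - υ)
    have h2 : Tendsto (fun n : ℕ => ((n:ℝ)) ^ (υ - 1)) atTop (𝓝 0) := by
      have h3 := h1.comp tendsto_natCast_atTop_atTop
      refine h3.congr (fun n => ?_)
      simp only [Function.comp_apply, neg_sub]
    filter_upwards [Filter.Tendsto.eventually_lt_const (by norm_num : (0:ℝ) < 1/2) h2,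
      eventually_ge_atTop 1] with n h2n hn1
    have hnpos : (0:ℝ) < n := by exact_mod_cast hn1
    calc (s n : ℝ) ≤ (n:ℝ) ^ υ := hs2 n
      _ = (n:ℝ) ^ ((1:ℝ) + (υ - 1)) := by norm_num
      _ = (n:ℝ) ^ (1:ℝ) * (n:ℝ) ^ (υ - 1) := Real.rpow_add hnpos 1 (υ - 1)
      _ ≤ (n:ℝ) * (1/2) := by
          rw [Real.rpow_one]
          exact mul_le_mul_of_nonneg_left (le_of_lt h2n) (le_of_lt hnpos)
      _ = (n:ℝ)/2 := by ring
  have hLtend : Tendsto L atTop atTop := by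
    have hbase : Tendsto (fun n : ℕ => (1 - υ) * Real.log (n:ℝ)) atTop atTop :=
      (Real.tendsto_log_atTop.const_mul_atTop (by linarith [hυ.2] : (0:ℝ) < 1 - υ)).comp
        tendsto_natCast_atTop_atTop
    apply tendsto_atTop_mono' atTop ?_ hbase
    filter_upwards [hE1, eventually_ge_atTop 1] with n hsn hn1
    have hnpos : (0:ℝ) < n := by exact_mod_cast hn1
    have hspos : (0:ℝ) < s n := by exact_mod_cast hsn
    have hstep : (n:ℝ) ^ ((1:ℝ) - υ) ≤ (n:ℝ) / (s n : ℝ) := by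
      rw [Real.rpow_sub hnpos, Real.rpow_one]
      exact div_le_div_of_nonneg_left (le_of_lt hnpos) hspos (hs2 n)
    have hlog := Real.log_le_log (by positivity) hstep
    rwa [Real.log_rpow hnpos] at hlog
  have hutend : Tendsto u atTop atTop := by
    apply sqrt_tendsto.comp
    exact hLtend.const_mul_atTop (by norm_num : (0:ℝ) < 2)
  -- tail sums tendsto 0
  have htail1 : Tendsto (fun n => (nu (Ici (ap * u n - aa * u n))).toReal) atTop (𝓝 0) := by
    apply tendsto_nu_Ici.comp
    exact (hutend.const_mul_atTop (by linarith : (0:ℝ) < ap - aa)).congr (fun n => by ring)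
  have htail2 : Tendsto (fun n => (nu (Iic (-(aa * u n)))).toReal) atTop (𝓝 0) :=
    tendsto_nu_Iic.comp (hutend.const_mul_atTop haa0)
  have hqtend : Tendsto (fun n => (nu (Ici (ap * u n - aa * u n))).toReal
      + (nu (Iic (-(aa * u n)))).toReal) atTop (𝓝 0) := by
    have := htail1.add htail2
    simpa using this
  have hE4 := Filter.Tendsto.eventually_lt_const (by linarith : (0:ℝ) < ε/3) hqtend
  -- rho tendsto atTop
  have hginner : Tendsto (fun v : ℝ => (1 - ap^2)/2 * v + (-ap)) atTop atTop :=
    tendsto_atTop_add_const_right _ _ (tendsto_id.const_mul_atTop (by nlinarith))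
  have hg : Tendsto gf atTop atTop :=
    tendsto_atTop_add_const_right _ _ (tendsto_id.atTop_mul_atTop₀ hginner)
  have hrho : Tendsto (fun n => (K/4) * Real.exp (gf (u n))) atTop atTop :=
    (Real.tendsto_exp_atTop.comp (hg.comp hutend)).const_mul_atTop (by positivity)
  have hE5 := hrho.eventually_ge_atTop (max 1 (6/ε))
  -- combine
  filter_upwards [hE1, hE2, hLtend.eventually_ge_atTop 1, hE4, hE5, eventually_ge_atTop 1]
    with n hsn hsn2 hLn hq hrhon hn1
  intro φ hφ
  have hnpos : (0:ℝ) < n := by exact_mod_cast hn1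
  have hspos : (0:ℝ) < s n := by exact_mod_cast hsn
  have hsle : s n ≤ n := by
    have : (s n : ℝ) ≤ (n : ℝ) := by linarith
    exact_mod_cast this
  have hu0 : 0 < u n := Real.sqrt_pos.mpr (by linarith)
  have hμpos : 0 < aa * u n := mul_pos haa0 hu0
  have hμts : aa * u n < ap * u n := by nlinarith
  set pn := (nu (Ici (ap * u n))).toReal with hpn
  have hpn0 : 0 ≤ pn := ENNReal.toReal_nonneg
  have hts0 : 0 ≤ ap * u n := by positivity
  have hplb : K * Real.exp (-(ap * u n + 1) ^ 2 / 2) ≤ pn := tail_lower hts0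
  set cn := ((n:ℝ) - s n) * pn / 2 with hcn
  -- lower bound on cn / s n
  have hexpL : Real.exp (L n) = (n:ℝ) / (s n : ℝ) := Real.exp_log (by positivity)
  have hgid : L n - (ap * u n + 1) ^ 2 / 2 = gf (u n) := by
    have husq : u n ^ 2 = 2 * L n := Real.sq_sqrt (by linarith)
    rw [hgf]
    dsimp only
    linear_combination (-(1:ℝ)/2) * husq
  have hnsx : (n:ℝ) = Real.exp (L n) * s n := by
    rw [hexpL]
    field_simp
  have hρcs : (K/4) * Real.exp (gf (u n)) ≤ cn / s n := by
    have step1 : ((n:ℝ)/2) * (K * Real.exp (-(ap * u n + 1) ^ 2 / 2)) / 2 / s n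
        ≤ cn / s n := by
      rw [hcn]
      gcongr <;> linarith [hplb]
    have step2 : ((n:ℝ)/2) * (K * Real.exp (-(ap * u n + 1) ^ 2 / 2)) / 2 / s n
        = (K/4) * Real.exp (gf (u n)) := by
      rw [← hgid, Real.exp_sub, hnsx, neg_div, Real.exp_neg]
      have h1 : Real.exp ((ap * u n + 1) ^ 2 / 2) ≠ 0 := Real.exp_ne_zero _
      field_simp
      ring
    linarith
  have hratio : max 1 (6/ε) ≤ cn / s n := le_trans hrhon hρcs
  have hrat1 : (1:ℝ) ≤ cn / s n := le_trans (le_max_left _ _) hratio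
  have hrat6 : 6/ε ≤ cn / s n := le_trans (le_max_right _ _) hratio
  have hsncn : (s n : ℝ) ≤ cn := by
    have := (one_le_div hspos).mp hrat1
    linarith
  have hcn1 : (1:ℝ) ≤ cn := le_trans (by exact_mod_cast hsn) hsncn
  have hcnpos : (0:ℝ) < cn := lt_of_lt_of_le zero_lt_one hcn1
  have hcn6 : 6/ε ≤ cn := by
    have h1 : 6/ε * s n ≤ cn := (le_div_iff₀ hspos).mp hrat6
    nlinarith [hspos, (by exact_mod_cast hsn : (1:ℝ) ≤ (s n : ℝ)), div_nonneg (by norm_num : (0:ℝ) ≤ 6) hε.le]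
  have h2cn : 2 / cn ≤ ε / 3 := by
    rw [div_le_iff₀ hcnpos]
    have h1 : 6 ≤ ε * cn := by
      have := (div_le_iff₀ hε).mp hcn6
      linarith [mul_comm cn ε]
    linarith
  have hscn : (s n : ℝ) / cn ≤ ε / 6 := by
    rw [div_le_div_iff₀ hcnpos (by norm_num : (0:ℝ) < 6)]
    have h1 : 6/ε * s n ≤ cn := (le_div_iff₀ hspos).mp hrat6
    have h2 := mul_le_mul_of_nonneg_left h1 hε.le
    have h3 : ε * (6/ε * (s n : ℝ)) = 6 * s n := by field_simp
    nlinarith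
  -- apply core
  have hcore := core n (s n) hsn hsle (aa * u n) (ap * u n) hμpos hμts φ hφ
    (by rw [← hpn]; exact hcn1)
  -- θ₀ membership
  refine ⟨(fun i => if (i:ℕ) < s n then aa * u n else 0), ?_, ?_⟩
  · constructor
    · have hfiltereq : Finset.univ.filter
          (fun i : Fin n => (if (i:ℕ) < s n then aa * u n else 0) ≠ 0)
          = Finset.univ.filter (fun i : Fin n => (i:ℕ) < s n) := by
        apply Finset.filter_congr
        intro i _
        by_cases h : (i:ℕ) < s n <;> simp [h, hμpos.ne']
      rw [hfiltereq]
      exact card_filter_lt n (s n) hsle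
    · intro i hi
      dsimp only at hi ⊢
      have hilt : (i:ℕ) < s n := by
        by_contra hcon
        simp only [if_neg hcon] at hi
        exact hi rfl
      rw [if_pos hilt, abs_of_pos hμpos]
      have huval : u n = Real.sqrt (2 * Real.log ((n:ℝ) / ((s n) : ℝ))) := by
        simp only [hudef, hLdef]
      rw [huval]
      exact mul_le_mul_of_nonneg_right (le_max_left a (1/2)) (Real.sqrt_nonneg _)
  · -- risk bound
    have hfour : 4 / (((n:ℝ) - s n) * pn) = 2 / cn := by
      rw [hcn]
      rw [div_div_eq_mul_div]
      have hne : ((n:ℝ) - s n) * pn ≠ 0 := by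
        intro hzero
        rw [hcn] at hcnpos
        rw [hzero] at hcnpos
        norm_num at hcnpos
      field_simp
      ring
    have hfrac : 1 - ε/6 ≤ cn / (cn + s n) := by
      have h1 : cn / (cn + s n) = 1 - (s n : ℝ) / (cn + s n) := by
        field_simp
        ring
      have h2 : (s n : ℝ) / (cn + s n) ≤ (s n : ℝ) / cn :=
        div_le_div_of_nonneg_left hspos.le hcnpos (by linarith)
      rw [h1]
      linarith [hscn]
    rw [← hpn, ← hcn] at hcore
    rw [hfour] at hcore
    have hqn : (nu (Ici (ap * u n - aa * u n))).toReal + (nu (Iic (-(aa * u n)))).toReal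
        ≤ ε/3 := le_of_lt hq
    calc (1:ℝ) - ε ≤ (1 - ε/6) - ε/3 - ε/3 := by linarith
      _ ≤ cn / (cn + s n) - 2/cn - ((nu (Ici (ap * u n - aa * u n))).toReal
          + (nu (Iic (-(aa * u n)))).toReal) := by
        have := hfrac
        linarith [h2cn, hqn]
      _ ≤ _ := hcore

lemma FDR_nonneg (n : ℕ) (θ : Fin n → ℝ) (φ : (Fin n → ℝ) → Fin n → Prop) :
    0 ≤ FDR n θ φ :=
  integral_nonneg (fun e => FDP_nonneg n θ φ _)

lemma FNR_nonneg (n : ℕ) (θ : Fin n → ℝ) (φ : (Fin n → ℝ) → Fin n → Prop) :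
    0 ≤ FNR n θ φ :=
  integral_nonneg (fun e => FNP_nonneg n θ φ _)

lemma FDR_le_one (n : ℕ) (θ : Fin n → ℝ) (φ : (Fin n → ℝ) → Fin n → Prop) :
    FDR n θ φ ≤ 1 := by
  have h := norm_integral_le_of_norm_le_const (μ := noise n) (C := 1)
    (f := fun e : Fin n → ℝ => FDP n θ φ (fun i => θ i + e i)) (ae_of_all _ (fun e => by
      rw [Real.norm_eq_abs]
      exact abs_le.mpr ⟨by linarith [FDP_nonneg n θ φ (fun i => θ i + e i)],
        FDP_le_one n θ φ (fun i => θ i + e i)⟩))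
  simp only [measureReal_def, measure_univ, ENNReal.toReal_one, mul_one] at h
  calc FDR n θ φ ≤ |FDR n θ φ| := le_abs_self _
    _ ≤ 1 := h

lemma FNR_le_one (n : ℕ) (θ : Fin n → ℝ) (φ : (Fin n → ℝ) → Fin n → Prop) :
    FNR n θ φ ≤ 1 := by
  have h := norm_integral_le_of_norm_le_const (μ := noise n) (C := 1)
    (f := fun e : Fin n → ℝ => FNP n θ φ (fun i => θ i + e i)) (ae_of_all _ (fun e => by
      rw [Real.norm_eq_abs]
      exact abs_le.mpr ⟨by linarith [FNP_nonneg n θ φ (fun i => θ i + e i)],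
        FNP_le_one n θ φ (fun i => θ i + e i)⟩))
  simp only [measureReal_def, measure_univ, ENNReal.toReal_one, mul_one] at h
  calc FNR n θ φ ≤ |FNR n θ φ| := le_abs_self _
    _ ≤ 1 := h

lemma triv_thresholding (n : ℕ) :
    IsThresholding n (fun x i => (0:ℝ) ≤ x i ∨ (0:ℝ) ≤ -(x i)) :=
  ⟨fun _ => 0, fun _ => 0, measurable_const, measurable_const,
    fun _ => ⟨le_refl 0, le_refl 0⟩, fun _ _ => Iff.rfl⟩

end CLB

/-- **Proposition 2 (lower bound on the classification risk below the boundary).**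
For `a < 1`, `s_n → ∞` with `s_n ≤ n^υ`, `υ ∈ (0,1)`, and the class `C` of two-sided
thresholding-based procedures,
`liminf_n inf_{φ ∈ C} sup_{θ₀ ∈ L₀[s_n;a]} (FDR(θ₀,φ) + FNR(θ₀,φ)) ≥ 1`. -/
theorem classification_lower_bound
    (a υ : ℝ) (ha : a < 1) (hυ : υ ∈ Set.Ioo (0 : ℝ) 1)
    (s : ℕ → ℕ) (hs1 : Filter.Tendsto s Filter.atTop Filter.atTop)
    (hs2 : ∀ n : ℕ, (s n : ℝ) ≤ (n : ℝ) ^ υ) :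
    1 ≤ Filter.liminf (fun n : ℕ =>
        sInf ((fun φ : (Fin n → ℝ) → Fin n → Prop =>
            sSup ((fun θ₀ => FDR n θ₀ φ + FNR n θ₀ φ) '' calL0 n (s n) a)) ''
          {φ | IsThresholding n φ})) Filter.atTop := by
  
  set F : ℕ → ℝ := fun n =>
      sInf ((fun φ : (Fin n → ℝ) → Fin n → Prop =>
        sSup ((fun θ₀ => FDR n θ₀ φ + FNR n θ₀ φ) '' calL0 n (s n) a)) ''
          {φ | IsThresholding n φ}) with hF
  have hmemtriv : ∀ n : ℕ,
      sSup ((fun θ₀ => FDR n θ₀ (fun x i => (0:ℝ) ≤ x i ∨ (0:ℝ) ≤ -(x i))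
          + FNR n θ₀ (fun x i => (0:ℝ) ≤ x i ∨ (0:ℝ) ≤ -(x i))) '' calL0 n (s n) a)
        ∈ ((fun φ : (Fin n → ℝ) → Fin n → Prop =>
            sSup ((fun θ₀ => FDR n θ₀ φ + FNR n θ₀ φ) '' calL0 n (s n) a)) ''
          {φ | IsThresholding n φ}) := by
    intro n
    exact ⟨_, CLB.triv_thresholding n, rfl⟩
  have hub : ∀ n : ℕ, ∀ v ∈ ((fun φ : (Fin n → ℝ) → Fin n → Prop =>
      sSup ((fun θ₀ => FDR n θ₀ φ + FNR n θ₀ φ) '' calL0 n (s n) a)) ''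
        {φ | IsThresholding n φ}), 0 ≤ v ∧ v ≤ 2 := by
    intro n v hv
    obtain ⟨φ, hφ, rfl⟩ := hv
    constructor
    · apply Real.sSup_nonneg
      rintro x ⟨θ₀, hθ₀, rfl⟩
      dsimp only
      have := CLB.FDR_nonneg n θ₀ φ
      have := CLB.FNR_nonneg n θ₀ φ
      linarith
    · apply Real.sSup_le
      · rintro x ⟨θ₀, hθ₀, rfl⟩
        dsimp only
        have := CLB.FDR_le_one n θ₀ φ
        have := CLB.FNR_le_one n θ₀ φ
        linarith
      · norm_num
  have hFle2 : ∀ n, F n ≤ 2 := by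
    intro n
    have h1 := csInf_le ⟨0, fun v hv => (hub n v hv).1⟩ (hmemtriv n)
    exact le_trans h1 (hub n _ (hmemtriv n)).2
  have hbdd : Filter.IsBoundedUnder (· ≤ ·) Filter.atTop F :=
    ⟨2, Filter.eventually_map.mpr (Filter.Eventually.of_forall hFle2)⟩
  have hkey : ∀ ε : ℝ, 0 < ε → 1 - ε ≤ Filter.liminf F Filter.atTop := by
    intro ε hε
    apply Filter.le_liminf_of_le hbdd.isCoboundedUnder_ge
    filter_upwards [CLB.eventually_good a υ ha hυ s hs1 hs2 hε] with n hn
    apply le_csInf ⟨_, hmemtriv n⟩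
    rintro v ⟨φ, hφ, rfl⟩
    obtain ⟨θ₀, hθ₀mem, hθ₀⟩ := hn φ hφ
    refine le_trans hθ₀ (le_csSup ⟨2, ?_⟩ ⟨θ₀, hθ₀mem, rfl⟩)
    rintro y ⟨θ₁, hθ₁, rfl⟩
    dsimp only
    have := CLB.FDR_le_one n θ₁ φ
    have := CLB.FNR_le_one n θ₁ φ
    linarith
  apply le_of_forall_pos_le_add
  intro ε hε
  have := hkey ε hε
  linarith
end

section
/- Let m ≥ 1, p₁,…,p_m ∈ (0,1), and let U = Σ_{i=1}^m B_i where B_i are independent Bernoulli(p_i) random variables. Let T be any nonnegative random variable independent of U. Then E[(T/(T+U))·1{T>0}] ≤ e^{−E[U]} + 12·E[T]/E[U]. -/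
open MeasureTheory ProbabilityTheory Filter Set
open scoped Classical ENNReal

/-- **Lemma (binomial denominator bound).** Let `U = Σ_{i=1}^m B_i` with `B_i` independent
Bernoulli(`p_i`) variables, `p_i ∈ (0,1)`, and let `T ≥ 0` be a (integrable) random variable
independent of `U`. Then `E[(T/(T+U))·1{T>0}] ≤ e^{−E[U]} + 12·E[T]/E[U]`
(here `E[U] = Σ_i p_i`). -/
theorem binomial_ratio_bound
    {Ω : Type*} [MeasurableSpace Ω] (μ : Measure Ω) [IsProbabilityMeasure μ]
    (m : ℕ) (hm : 1 ≤ m) (p : Fin m → ℝ) (hp : ∀ i, p i ∈ Set.Ioo (0 : ℝ) 1)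
    (B : Fin m → Ω → ℝ)
    (hBmeas : ∀ i, Measurable (B i))
    (hB01 : ∀ i ω, B i ω = 0 ∨ B i ω = 1)
    (hBp : ∀ i, μ {ω | B i ω = 1} = ENNReal.ofReal (p i))
    (hBindep : iIndepFun B μ)
    (T : Ω → ℝ) (hT0 : ∀ ω, 0 ≤ T ω) (hTmeas : Measurable T)
    (hTint : Integrable T μ)
    (hTU : IndepFun T (fun ω => ∑ i, B i ω) μ) :
    ∫ ω, (if 0 < T ω then T ω / (T ω + ∑ i, B i ω) else 0) ∂μ ≤
      Real.exp (-(∑ i, p i)) + 12 * (∫ ω, T ω ∂μ) / (∑ i, p i) := by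
  haveI : Nonempty (Fin m) := ⟨⟨0, hm⟩⟩
  have hpnn : ∀ i, 0 ≤ p i := fun i => (hp i).1.le
  set S : ℝ := ∑ i, p i with hSdef
  have hS0 : 0 < S := Finset.sum_pos (fun i _ => (hp i).1) Finset.univ_nonempty
  set U : Ω → ℝ := fun ω => ∑ i, B i ω with hUdef
  have hUapp : ∀ ω, (∑ i, B i ω) = U ω := fun ω => rfl
  simp only [hUapp]
  have hUmeas : Measurable U := Finset.measurable_sum _ (fun i _ => hBmeas i)
  have hB0 : ∀ i ω, 0 ≤ B i ω := by
    intro i ω; rcases hB01 i ω with h | h <;> simp [h]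
  have hU0 : ∀ ω, 0 ≤ U ω := fun ω => Finset.sum_nonneg fun i _ => hB0 i ω
  have hUalt : ∀ ω, U ω = 0 ∨ 1 ≤ U ω := by
    intro ω
    by_cases h : ∀ i, B i ω = 0
    · left; simp only [hUdef]; exact Finset.sum_eq_zero fun i _ => h i
    · right
      push_neg at h
      obtain ⟨j, hj⟩ := h
      have hj1 : B j ω = 1 := (hB01 j ω).resolve_left hj
      calc (1 : ℝ) = B j ω := hj1.symm
        _ ≤ U ω := Finset.single_le_sum (fun i _ => hB0 i ω) (Finset.mem_univ j)
  -- B i is in L², with mean p i and variance ≤ p i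
  have hBL2 : ∀ i, MemLp (B i) 2 μ := fun i =>
    MemLp.of_bound (hBmeas i).aestronglyMeasurable 1
      (ae_of_all _ fun ω => by rcases hB01 i ω with h | h <;> simp [h])
  have hBint : ∀ i, Integrable (B i) μ := fun i => (hBL2 i).integrable (by norm_num)
  have hEB : ∀ i, ∫ ω, B i ω ∂μ = p i := by
    intro i
    have hset : MeasurableSet {ω | B i ω = 1} := hBmeas i (measurableSet_singleton 1)
    have heq : (fun ω => B i ω) = Set.indicator {ω | B i ω = 1} (fun _ => (1 : ℝ)) := by
      funext ω
      by_cases hmem : ω ∈ {ω | B i ω = 1}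
      · simp only [Set.indicator_of_mem hmem]; exact hmem
      · have h0 : B i ω = 0 := (hB01 i ω).resolve_right hmem
        simp [Set.indicator_of_notMem hmem, h0]
    rw [heq, MeasureTheory.integral_indicator_const (1 : ℝ) hset, measureReal_def, hBp i, smul_eq_mul, mul_one,
      ENNReal.toReal_ofReal (hpnn i)]
  have hEU : ∫ ω, U ω ∂μ = S := by
    simp only [hUdef]
    rw [MeasureTheory.integral_finset_sum _ (fun i _ => hBint i)]
    exact Finset.sum_congr rfl fun i _ => hEB i
  have hUL2 : MemLp U 2 μ := by
    have : U = ∑ i, B i := by funext ω; simp [hUdef]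
    rw [this]
    exact memLp_finset_sum' _ fun i _ => hBL2 i
  have hVarB : ∀ i, variance (B i) μ ≤ p i := by
    intro i
    rw [variance_eq_sub (hBL2 i)]
    have hsq : (B i) ^ 2 = B i := by
      funext ω
      rcases hB01 i ω with h | h <;> simp [h]
    have h1 : μ[(B i) ^ 2] = p i := by rw [hsq]; exact hEB i
    have h2 : μ[B i] = p i := hEB i
    rw [h1, h2]
    nlinarith [sq_nonneg (p i), (hp i).1]
  have hVarU : variance U μ ≤ S := by
    have hUeq : U = ∑ i, B i := by funext ω; simp [hUdef]
    rw [hUeq, IndepFun.variance_sum (fun i _ => hBL2 i)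
      (fun i _ j _ hij => hBindep.indepFun hij)]
    exact Finset.sum_le_sum fun i _ => hVarB i
  -- Chebyshev
  have hdevmeas : MeasurableSet {ω | S / 2 ≤ |U ω - S|} := by
    apply measurableSet_le measurable_const
    exact (hUmeas.sub measurable_const).abs
  have hcheb : (μ {ω | S / 2 ≤ |U ω - S|}).toReal ≤ 4 / S := by
    have h := meas_ge_le_variance_div_sq (μ := μ) hUL2 (c := S / 2) (by positivity)
    rw [hEU] at h
    have h2 : variance U μ / (S / 2) ^ 2 ≤ 4 / S := by
      rw [div_le_div_iff₀ (by positivity) hS0]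
      nlinarith [hVarU, variance_nonneg U μ]
    calc (μ {ω | S / 2 ≤ |U ω - S|}).toReal
        ≤ (ENNReal.ofReal (variance U μ / (S / 2) ^ 2)).toReal :=
          ENNReal.toReal_mono ENNReal.ofReal_ne_top h
      _ = variance U μ / (S / 2) ^ 2 := ENNReal.toReal_ofReal (div_nonneg (variance_nonneg _ _) (by positivity))
      _ ≤ 4 / S := h2
  -- probability that U = 0
  have hU0meas : MeasurableSet {ω | U ω = 0} := hUmeas (measurableSet_singleton 0)
  have hU0set : {ω | U ω = 0} = ⋂ i, {ω | B i ω = 0} := by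
    ext ω
    simp only [mem_setOf_eq, mem_iInter]
    constructor
    · intro h i
      have := (Finset.sum_eq_zero_iff_of_nonneg (fun i _ => hB0 i ω)).1 h
      exact this i (Finset.mem_univ i)
    · intro h
      simp only [hUdef]; exact Finset.sum_eq_zero fun i _ => h i
  have hPB0 : ∀ i, μ {ω | B i ω = 0} = ENNReal.ofReal (1 - p i) := by
    intro i
    have hc : {ω | B i ω = 0} = {ω | B i ω = 1}ᶜ := by
      ext ω
      simp only [mem_setOf_eq, mem_compl_iff]
      rcases hB01 i ω with h | h <;> simp [h]
    have hcompl := prob_compl_eq_one_sub (μ := μ) (s := {ω | B i ω = 1})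
      (hBmeas i (measurableSet_singleton 1))
    rw [hc, hcompl, hBp i, ← ENNReal.ofReal_one, ← ENNReal.ofReal_sub _ (hpnn i)]
  have hPU0 : (μ {ω | U ω = 0}).toReal ≤ Real.exp (-S) := by
    have hprod := hBindep.meas_iInter (s := fun i => {ω | B i ω = 0})
      (fun i => ⟨{0}, measurableSet_singleton 0, rfl⟩)
    rw [hU0set, hprod, ENNReal.toReal_prod]
    calc (∏ i, (μ {ω | B i ω = 0}).toReal)
        = ∏ i, (1 - p i) := by
          refine Finset.prod_congr rfl fun i _ => ?_
          rw [hPB0 i, ENNReal.toReal_ofReal (by linarith [(hp i).2])]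
      _ ≤ ∏ i, Real.exp (-p i) := by
          refine Finset.prod_le_prod (fun i _ => by linarith [(hp i).2]) fun i _ => ?_
          linarith [Real.add_one_le_exp (-p i)]
      _ = Real.exp (-S) := by
          rw [← Real.exp_sum]
          congr 1
          rw [hSdef, ← Finset.sum_neg_distrib]
  -- the auxiliary function g
  set g : ℝ → ℝ := fun x => if 1 ≤ x then x⁻¹ else 0 with hgdef
  have hgmeas : Measurable g := by
    apply Measurable.ite _ measurable_inv measurable_const
    exact measurableSet_le measurable_const measurable_id
  have hg_nonneg : ∀ x, 0 ≤ g x := by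
    intro x; simp only [hgdef]
    split
    · positivity
    · exact le_refl 0
  have hg_le_one : ∀ ω, g (U ω) ≤ 1 := by
    intro ω; simp only [hgdef]
    split
    · exact inv_le_one_of_one_le₀ (by assumption)
    · norm_num
  have hTgU : IndepFun T (fun ω => g (U ω)) μ := by
    have := hTU.comp measurable_id hgmeas
    exact this
  have hgUmeas : Measurable fun ω => g (U ω) := hgmeas.comp hUmeas
  have hgUint : Integrable (fun ω => g (U ω)) μ := by
    apply Integrable.mono' (integrable_const (1 : ℝ)) hgUmeas.aestronglyMeasurable
    refine ae_of_all _ fun ω => ?_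
    rw [Real.norm_eq_abs, abs_of_nonneg (hg_nonneg _)]
    exact hg_le_one ω
  have hTgUint : Integrable (fun ω => T ω * g (U ω)) μ := by
    have := hTint.bdd_mul (c := 1) hgUmeas.aestronglyMeasurable
      (ae_of_all _ fun ω => by
        rw [Real.norm_eq_abs, abs_of_nonneg (hg_nonneg _)]; exact hg_le_one ω)
    simpa [mul_comm] using this
  -- pointwise bound for the main integrand
  have hfmeas : Measurable fun ω => if 0 < T ω then T ω / (T ω + U ω) else 0 := by
    apply Measurable.ite _ (hTmeas.div (hTmeas.add hUmeas)) measurable_const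
    exact measurableSet_lt measurable_const hTmeas
  have hf01 : ∀ ω, (if 0 < T ω then T ω / (T ω + U ω) else 0) ∈ Set.Icc (0 : ℝ) 1 := by
    intro ω
    split
    · next h =>
      constructor
      · exact div_nonneg (hT0 ω) (by linarith [hU0 ω])
      · apply div_le_one_of_le₀
        · linarith [hU0 ω]
        · linarith [hU0 ω]
    · exact ⟨le_refl 0, by norm_num⟩
  have hfint : Integrable (fun ω => if 0 < T ω then T ω / (T ω + U ω) else 0) μ := by
    apply Integrable.mono' (integrable_const (1 : ℝ)) hfmeas.aestronglyMeasurable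
    refine ae_of_all _ fun ω => ?_
    rw [Real.norm_eq_abs, abs_of_nonneg (hf01 ω).1]
    exact (hf01 ω).2
  have hindint : Integrable (Set.indicator {ω | U ω = 0} fun _ => (1 : ℝ)) μ :=
    (integrable_const (1 : ℝ)).indicator hU0meas
  have hpt : ∀ ω, (if 0 < T ω then T ω / (T ω + U ω) else 0) ≤
      Set.indicator {ω | U ω = 0} (fun _ => (1 : ℝ)) ω + T ω * g (U ω) := by
    intro ω
    have hind0 : 0 ≤ Set.indicator {ω | U ω = 0} (fun _ => (1 : ℝ)) ω := by
      apply Set.indicator_nonneg; intro _ _; norm_num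
    split
    · next hT =>
      rcases hUalt ω with h | h
      · have hmem : ω ∈ {ω | U ω = 0} := h
        rw [Set.indicator_of_mem hmem]
        have : T ω / (T ω + U ω) = 1 := by rw [h, add_zero, div_self (ne_of_gt hT)]
        rw [this]
        have : 0 ≤ T ω * g (U ω) := mul_nonneg (hT0 ω) (hg_nonneg _)
        linarith
      · have hgU : g (U ω) = (U ω)⁻¹ := if_pos h
        have hUpos : 0 < U ω := lt_of_lt_of_le one_pos h
        have hdiv : T ω / (T ω + U ω) ≤ T ω / U ω := by
          apply div_le_div_of_nonneg_left (hT0 ω) hUpos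
          linarith
        rw [hgU]
        calc T ω / (T ω + U ω) ≤ T ω / U ω := hdiv
          _ = T ω * (U ω)⁻¹ := div_eq_mul_inv _ _
          _ ≤ _ := le_add_of_nonneg_left hind0
    · have : 0 ≤ T ω * g (U ω) := mul_nonneg (hT0 ω) (hg_nonneg _)
      linarith
  -- bound on E[g(U)]
  have hgU_nonneg : 0 ≤ ∫ ω, g (U ω) ∂μ := integral_nonneg fun ω => hg_nonneg _
  have hdevint : Integrable (Set.indicator {ω | S / 2 ≤ |U ω - S|} fun _ => (1 : ℝ)) μ :=
    (integrable_const (1 : ℝ)).indicator hdevmeas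
  have hgU_le : ∫ ω, g (U ω) ∂μ ≤ 6 / S := by
    have hpt2 : ∀ ω, g (U ω) ≤
        2 / S + Set.indicator {ω | S / 2 ≤ |U ω - S|} (fun _ => (1 : ℝ)) ω := by
      intro ω
      have hind0 : 0 ≤ Set.indicator {ω | S / 2 ≤ |U ω - S|} (fun _ => (1 : ℝ)) ω := by
        apply Set.indicator_nonneg; intro _ _; norm_num
      rcases hUalt ω with h | h
      · have : g (U ω) = 0 := by simp only [hgdef]; rw [h]; norm_num
        rw [this]
        positivity
      · have hgU : g (U ω) = (U ω)⁻¹ := if_pos h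
        have hUpos : 0 < U ω := lt_of_lt_of_le one_pos h
        by_cases hc : S / 2 ≤ U ω
        · have : (U ω)⁻¹ ≤ 2 / S := by
            have h1 : (U ω)⁻¹ ≤ (S / 2)⁻¹ := inv_anti₀ (by positivity) hc
            have h2 : (S / 2)⁻¹ = 2 / S := by field_simp
            linarith
          rw [hgU]
          linarith
        · push_neg at hc
          have hmem : ω ∈ {ω | S / 2 ≤ |U ω - S|} := by
            simp only [mem_setOf_eq]
            rw [abs_of_nonpos (by linarith)]
            linarith
          rw [Set.indicator_of_mem hmem, hgU]
          have : (U ω)⁻¹ ≤ 1 := inv_le_one_of_one_le₀ h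
          have h2S : 0 ≤ 2 / S := by positivity
          linarith
    calc ∫ ω, g (U ω) ∂μ
        ≤ ∫ ω, (2 / S + Set.indicator {ω | S / 2 ≤ |U ω - S|} (fun _ => (1 : ℝ)) ω) ∂μ :=
          integral_mono hgUint ((integrable_const _).add hdevint) hpt2
      _ = 2 / S + (μ {ω | S / 2 ≤ |U ω - S|}).toReal := by
          rw [integral_add (integrable_const _) hdevint, integral_const,
            MeasureTheory.integral_indicator_const (1 : ℝ) hdevmeas]
          simp
          rfl
      _ ≤ 2 / S + 4 / S := by linarith [hcheb]
      _ = 6 / S := by ring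
  -- put everything together
  have hET : 0 ≤ ∫ ω, T ω ∂μ := integral_nonneg hT0
  have hmul : ∫ ω, T ω * g (U ω) ∂μ = (∫ ω, T ω ∂μ) * ∫ ω, g (U ω) ∂μ := by
    have := hTgU.integral_fun_mul_eq_mul_integral hTmeas.aestronglyMeasurable hgUmeas.aestronglyMeasurable
    simpa [Pi.mul_apply] using this
  calc ∫ ω, (if 0 < T ω then T ω / (T ω + U ω) else 0) ∂μ
      ≤ ∫ ω, (Set.indicator {ω | U ω = 0} (fun _ => (1 : ℝ)) ω + T ω * g (U ω)) ∂μ :=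
        integral_mono hfint (hindint.add hTgUint) hpt
    _ = (μ {ω | U ω = 0}).toReal + (∫ ω, T ω ∂μ) * ∫ ω, g (U ω) ∂μ := by
        rw [integral_add hindint hTgUint, MeasureTheory.integral_indicator_const (1 : ℝ) hU0meas, hmul]
        simp
        rfl
    _ ≤ Real.exp (-S) + (∫ ω, T ω ∂μ) * (6 / S) := by
        have := mul_le_mul_of_nonneg_left hgU_le hET
        linarith [hPU0]
    _ ≤ Real.exp (-S) + 12 * (∫ ω, T ω ∂μ) / S := by
        have h1 : (∫ ω, T ω ∂μ) * (6 / S) = 6 * (∫ ω, T ω ∂μ) / S := by ring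
        have h2 : 6 * (∫ ω, T ω ∂μ) / S ≤ 12 * (∫ ω, T ω ∂μ) / S := by
          gcongr
          linarith
        linarith
end
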